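/- (Near-diagonal second-difference bound.) Let n ≥ 1 be an integer, α ∈ (0,2), λ ∈ (0,1), and κ ≥ 2 an even integer, and let w = w_{λ,κ}. Then there exists a constant C = C(n,α,λ,κ) > 0 such that for all x ∈ ℝⁿ, ∫_{|y| ≤ 1} |2 w(x) − w(x+y) − w(x−y)| / |y|^{n+α} dy ≤ C · w(x). -/

import Mathlib

set_option maxHeartbeats 1600000
open Real MeasureTheory

lemma pow_le_one_add_pow {s : ℝ} (hs : 0 ≤ s) {j k : ℕ} (h : j ≤ k) : s ^ j ≤ 1 + s ^ k := by
  rcases le_total s 1 with h1 | h1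
  · have := pow_le_one₀ hs h1 (n := j)
    nlinarith [pow_nonneg hs k]
  · have := pow_le_pow_right₀ h1 h
    nlinarith [pow_nonneg hs j]

lemma comp_bound {n : ℕ} {μ : ℝ} (hμ0 : 0 ≤ μ) (hμ1 : μ ≤ 1) (κ : ℕ)
    {x z : EuclideanSpace ℝ (Fin n)} (hz : ‖z - x‖ ≤ 1) :
    (1 + ‖z‖ ^ κ) ^ (-μ) ≤ 2 ^ (κ + 1) * (1 + ‖x‖ ^ κ) ^ (-μ) := by
  have hx0 : (0:ℝ) < 1 + ‖x‖ ^ κ := by positivity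
  have hz0 : (0:ℝ) < 1 + ‖z‖ ^ κ := by positivity
  have h1 : ‖x‖ ≤ ‖z‖ + 1 := by
    have := norm_sub_norm_le x z
    have h2 : ‖x - z‖ ≤ 1 := by rwa [norm_sub_rev]
    linarith
  have hone : (1:ℝ) ≤ 2 ^ κ := one_le_pow₀ (by norm_num)
  have hmax : (max ‖z‖ 1) ^ κ ≤ 1 + ‖z‖ ^ κ := by
    rcases max_cases ‖z‖ 1 with ⟨h, _⟩ | ⟨h, _⟩ <;> rw [h]
    · linarith
    · simp
  have h2 : 1 + ‖x‖ ^ κ ≤ 2 ^ (κ + 1) * (1 + ‖z‖ ^ κ) := by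
    have hxz : ‖x‖ ^ κ ≤ (2 * max ‖z‖ 1) ^ κ := by
      apply pow_le_pow_left₀ (norm_nonneg x)
      rcases le_total ‖z‖ 1 with h | h
      · rw [max_eq_right h]; linarith
      · rw [max_eq_left h]; linarith
    rw [mul_pow] at hxz
    have hk : (1:ℝ) ≤ 2 ^ κ * (1 + ‖z‖ ^ κ) := by
      have h3 : (1:ℝ)*1 ≤ 2 ^ κ * (1 + ‖z‖ ^ κ) :=
        mul_le_mul hone (by nlinarith [pow_nonneg (norm_nonneg z) κ]) one_pos.le (by positivity)
      linarith
    have : (2:ℝ) ^ (κ + 1) = 2 ^ κ + 2 ^ κ := by ring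
    nlinarith [mul_le_mul_of_nonneg_left hmax (by positivity : (0:ℝ) ≤ 2 ^ κ)]
  -- now use antitonicity
  have key : (1 + ‖z‖ ^ κ) ^ (-μ) ≤ ((1 + ‖x‖ ^ κ) / 2 ^ (κ + 1)) ^ (-μ) := by
    apply rpow_le_rpow_of_nonpos (by positivity)
    · rw [div_le_iff₀ (by positivity)]; linarith
    · linarith
  calc (1 + ‖z‖ ^ κ) ^ (-μ) ≤ ((1 + ‖x‖ ^ κ) / 2 ^ (κ + 1)) ^ (-μ) := key
    _ = (1 + ‖x‖ ^ κ) ^ (-μ) / ((2:ℝ) ^ ((κ + 1 : ℕ) : ℝ)) ^ (-μ) := by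
        rw [div_rpow hx0.le (by positivity), rpow_natCast]
    _ = (2:ℝ) ^ (((κ + 1 : ℕ) : ℝ) * μ) * (1 + ‖x‖ ^ κ) ^ (-μ) := by
        rw [← rpow_mul (by norm_num : (0:ℝ) ≤ 2), div_eq_mul_inv, ← rpow_neg (by norm_num : (0:ℝ) ≤ 2)]
        rw [show -(((κ + 1 : ℕ) : ℝ) * -μ) = ((κ + 1 : ℕ) : ℝ) * μ by ring, mul_comm]
    _ ≤ 2 ^ (κ + 1) * (1 + ‖x‖ ^ κ) ^ (-μ) := by
        apply mul_le_mul_of_nonneg_right _ (by positivity)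
        calc (2:ℝ) ^ (((κ + 1 : ℕ) : ℝ) * μ) ≤ (2:ℝ) ^ ((κ + 1 : ℕ) : ℝ) := by
              apply rpow_le_rpow_of_exponent_le (by norm_num)
              exact mul_le_of_le_one_right (by positivity) hμ1
          _ = 2 ^ (κ + 1) := by rw [rpow_natCast]

lemma h2bound {m : ℕ} (hm : 1 ≤ m) {μ s c B1 P : ℝ} (hμ0 : 0 < μ) (hμ1 : μ ≤ 1)
    (hs0 : 0 ≤ s) (hc0 : 0 ≤ c) (hB1 : B1^2 ≤ 4*(s*c)) (hP : P = 1 + s^m) :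
    |(-μ) * (((-μ)-1) * P^((-μ)-2) * ((m:ℝ)*s^(m-1)*B1)^2
      + P^((-μ)-1) * (((m:ℝ)*((m:ℝ)-1))*s^(m-2)*B1^2 + (m:ℝ)*s^(m-1)*(2*c)))|
      ≤ 12*(m:ℝ)^2*c*P^(-μ) := by
  have hP1 : 1 ≤ P := by rw [hP]; nlinarith [pow_nonneg hs0 m]
  have hP0 : (0:ℝ) < P := lt_of_lt_of_le one_pos hP1
  have hm1 : (1:ℝ) ≤ (m:ℝ) := by exact_mod_cast hm
  generalize hp1 : (m:ℝ)*s^(m-1)*B1 = p1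
  generalize hp2 : ((m:ℝ)*((m:ℝ)-1))*s^(m-2)*B1^2 + (m:ℝ)*s^(m-1)*(2*c) = p2
  have hpow1 : (s^(m-1))^2 * s = s^(2*m-1) := by
    rw [← pow_mul, ← pow_succ]; congr 1; omega
  have hp1sq : p1^2 ≤ 4*(m:ℝ)^2 * c * s^(2*m-1) := by
    have h1 : (m:ℝ)^2 * (s^(m-1))^2 * B1^2 ≤ (m:ℝ)^2 * (s^(m-1))^2 * (4*(s*c)) :=
      mul_le_mul_of_nonneg_left hB1 (by positivity)
    calc p1^2 = (m:ℝ)^2 * (s^(m-1))^2 * B1^2 := by rw [← hp1]; ring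
      _ ≤ (m:ℝ)^2 * (s^(m-1))^2 * (4*(s*c)) := h1
      _ = 4*(m:ℝ)^2*c*((s^(m-1))^2 * s) := by ring
      _ = 4*(m:ℝ)^2*c*s^(2*m-1) := by rw [hpow1]
  have hs2m1 : s^(2*m-1) ≤ P^2 := by
    have h1 := pow_le_one_add_pow hs0 (j := 2*m-1) (k := 2*m) (by omega)
    have e : P^2 = 1 + 2*s^m + s^(2*m) := by
      rw [hP, mul_comm 2 m, pow_mul']; ring
    nlinarith [pow_nonneg hs0 m]
  have hsm1P : s^(m-1) ≤ P := by
    have h1 := pow_le_one_add_pow hs0 (j := m-1) (k := m) (Nat.sub_le m 1)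
    rw [hP]; exact h1
  have hB1nn : 0 ≤ B1^2 := sq_nonneg _
  have hp2nonneg : 0 ≤ p2 := by
    rw [← hp2]
    have : (0:ℝ) ≤ (m:ℝ)*((m:ℝ)-1) := by nlinarith [hm1]
    positivity
  have hp2le : p2 ≤ 4*(m:ℝ)^2*c*P := by
    have hco : (0:ℝ) ≤ (m:ℝ)*((m:ℝ)-1) := by nlinarith [hm1]
    have h2 : s^(m-2) * s = s^(m-1) ∨ m = 1 := by
      rcases Nat.lt_or_ge m 2 with hm2 | hm2
      · right; omega
      · left; rw [← pow_succ]; congr 1; omega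
    have hT1 : ((m:ℝ)*((m:ℝ)-1))*s^(m-2)*B1^2 ≤ 4*((m:ℝ)*((m:ℝ)-1))*c*s^(m-1) := by
      rcases h2 with h2 | h2
      · have h1 : ((m:ℝ)*((m:ℝ)-1))*s^(m-2)*B1^2 ≤ ((m:ℝ)*((m:ℝ)-1))*s^(m-2)*(4*(s*c)) :=
          mul_le_mul_of_nonneg_left hB1 (by positivity)
        calc ((m:ℝ)*((m:ℝ)-1))*s^(m-2)*B1^2 ≤ ((m:ℝ)*((m:ℝ)-1))*s^(m-2)*(4*(s*c)) := h1
          _ = 4*((m:ℝ)*((m:ℝ)-1))*c*(s^(m-2)*s) := by ring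
          _ = 4*((m:ℝ)*((m:ℝ)-1))*c*s^(m-1) := by rw [h2]
      · subst h2; norm_num
    have hsp : (0:ℝ) ≤ s^(m-1) := pow_nonneg hs0 _
    have hcoef : (4*((m:ℝ)*((m:ℝ)-1)) + 2*(m:ℝ)) ≤ 4*(m:ℝ)^2 := by nlinarith [hm1]
    calc p2 = ((m:ℝ)*((m:ℝ)-1))*s^(m-2)*B1^2 + (m:ℝ)*s^(m-1)*(2*c) := hp2.symm
      _ ≤ 4*((m:ℝ)*((m:ℝ)-1))*c*s^(m-1) + (m:ℝ)*s^(m-1)*(2*c) := add_le_add_left hT1 _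
      _ = (4*((m:ℝ)*((m:ℝ)-1)) + 2*(m:ℝ))*(c*s^(m-1)) := by ring
      _ ≤ (4*(m:ℝ)^2)*(c*s^(m-1)) := mul_le_mul_of_nonneg_right hcoef (by positivity)
      _ = 4*(m:ℝ)^2*c*s^(m-1) := by ring
      _ ≤ 4*(m:ℝ)^2*c*P := by
          apply mul_le_mul_of_nonneg_left hsm1P (by positivity)
  have ePm : P ^ (-μ-2) * P^2 = P ^ (-μ) := by
    rw [← Real.rpow_natCast P 2, ← Real.rpow_add hP0]; norm_num
  have ePm1 : P ^ (-μ-1) * P = P ^ (-μ) := by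
    nth_rewrite 2 [← Real.rpow_one P]
    rw [← Real.rpow_add hP0]; norm_num
  have e : (-μ) * (((-μ)-1) * P^((-μ)-2) * p1^2 + P^((-μ)-1) * p2)
      = μ*(μ+1)*(P^(-μ-2)*p1^2) - μ*(P^(-μ-1)*p2) := by ring
  rw [e]
  have hXpos : 0 ≤ μ*(μ+1)*(P^(-μ-2)*p1^2) := by positivity
  have hYpos : 0 ≤ μ*(P^(-μ-1)*p2) :=
    mul_nonneg hμ0.le (mul_nonneg (Real.rpow_nonneg hP0.le _) hp2nonneg)
  have hX : μ*(μ+1)*(P^(-μ-2)*p1^2) ≤ 8*(m:ℝ)^2*c*P^(-μ) := by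
    have h1 : P^(-μ-2)*p1^2 ≤ P^(-μ-2)*(4*(m:ℝ)^2*c*s^(2*m-1)) :=
      mul_le_mul_of_nonneg_left hp1sq (Real.rpow_nonneg hP0.le _)
    have h2 : P^(-μ-2)*(4*(m:ℝ)^2*c*s^(2*m-1)) ≤ P^(-μ-2)*(4*(m:ℝ)^2*c*P^2) := by
      apply mul_le_mul_of_nonneg_left _ (Real.rpow_nonneg hP0.le _)
      exact mul_le_mul_of_nonneg_left hs2m1 (by positivity)
    have h3 : P^(-μ-2)*(4*(m:ℝ)^2*c*P^2) = 4*(m:ℝ)^2*c*P^(-μ) := by rw [← ePm]; ring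
    have hμμ : μ*(μ+1) ≤ 2 := by nlinarith [hμ0.le, hμ1]
    have hnn : 0 ≤ P^(-μ-2)*p1^2 := mul_nonneg (Real.rpow_nonneg hP0.le _) (sq_nonneg _)
    calc μ*(μ+1)*(P^(-μ-2)*p1^2) ≤ 2*(P^(-μ-2)*p1^2) :=
          mul_le_mul_of_nonneg_right hμμ hnn
      _ ≤ 2*(4*(m:ℝ)^2*c*P^(-μ)) := by
          apply mul_le_mul_of_nonneg_left _ (by norm_num)
          calc P^(-μ-2)*p1^2 ≤ _ := h1
            _ ≤ _ := h2
            _ = _ := h3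
      _ = 8*(m:ℝ)^2*c*P^(-μ) := by ring
  have hY : μ*(P^(-μ-1)*p2) ≤ 4*(m:ℝ)^2*c*P^(-μ) := by
    have h1 : P^(-μ-1)*p2 ≤ P^(-μ-1)*(4*(m:ℝ)^2*c*P) :=
      mul_le_mul_of_nonneg_left hp2le (Real.rpow_nonneg hP0.le _)
    have h2 : P^(-μ-1)*(4*(m:ℝ)^2*c*P) = 4*(m:ℝ)^2*c*P^(-μ) := by rw [← ePm1]; ring
    calc μ*(P^(-μ-1)*p2) ≤ 1*(P^(-μ-1)*p2) :=
          mul_le_mul_of_nonneg_right hμ1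
            (mul_nonneg (Real.rpow_nonneg hP0.le _) hp2nonneg)
      _ = P^(-μ-1)*p2 := by ring
      _ ≤ 4*(m:ℝ)^2*c*P^(-μ) := by rw [← h2]; exact h1
  calc |μ*(μ+1)*(P^(-μ-2)*p1^2) - μ*(P^(-μ-1)*p2)|
      ≤ |μ*(μ+1)*(P^(-μ-2)*p1^2)| + |μ*(P^(-μ-1)*p2)| := abs_sub _ _
    _ = μ*(μ+1)*(P^(-μ-2)*p1^2) + μ*(P^(-μ-1)*p2) := by
        rw [abs_of_nonneg hXpos, abs_of_nonneg hYpos]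
    _ ≤ 8*(m:ℝ)^2*c*P^(-μ) + 4*(m:ℝ)^2*c*P^(-μ) := add_le_add hX hY
    _ = 12*(m:ℝ)^2*c*P^(-μ) := by ring

lemma secdiff_bound {n : ℕ} {m : ℕ} (hm : 1 ≤ m) {μ : ℝ} (hμ0 : 0 < μ) (hμ1 : μ ≤ 1)
    (x y : EuclideanSpace ℝ (Fin n)) (hy : ‖y‖ ≤ 1) :
    |2 * (1 + ‖x‖ ^ (2*m)) ^ (-μ) - (1 + ‖x + y‖ ^ (2*m)) ^ (-μ) - (1 + ‖x - y‖ ^ (2*m)) ^ (-μ)|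
      ≤ (24 * (m:ℝ)^2 * 2 ^ (2*m + 1)) * (1 + ‖x‖ ^ (2*m)) ^ (-μ) * ‖y‖ ^ 2 := by
  set a : ℝ := ‖x‖ ^ 2 with ha
  set b : ℝ := inner ℝ x y with hb
  set c : ℝ := ‖y‖ ^ 2 with hc
  set q : ℝ → ℝ := fun t => a + 2*b*t + c*t^2 with hqdef
  set q1 : ℝ → ℝ := fun t => 2*b + 2*c*t with hq1def
  set p : ℝ → ℝ := fun t => 1 + q t ^ m with hpdef
  set p1 : ℝ → ℝ := fun t => (m:ℝ) * q t ^ (m-1) * q1 t with hp1def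
  set p2 : ℝ → ℝ := fun t => ((m:ℝ)*((m:ℝ)-1)) * q t ^ (m-2) * (q1 t)^2
      + (m:ℝ) * q t ^ (m-1) * (2*c) with hp2def
  set h : ℝ → ℝ := fun t => p t ^ (-μ) with hhdef
  set h1 : ℝ → ℝ := fun t => p1 t * (-μ) * p t ^ (-μ - 1) with hh1def
  set h2 : ℝ → ℝ := fun t =>
      (-μ) * (((-μ)-1) * p t ^ ((-μ)-2) * (p1 t)^2 + p t ^ ((-μ)-1) * p2 t) with hh2def
  -- q t is the squared norm
  have hq : ∀ t : ℝ, q t = ‖x + t • y‖ ^ 2 := by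
    intro t
    rw [hqdef]
    simp only
    rw [norm_add_sq_real, real_inner_smul_right, norm_smul, Real.norm_eq_abs, mul_pow, sq_abs]
    ring
  have hq0 : ∀ t : ℝ, 0 ≤ q t := fun t => by rw [hq t]; positivity
  have hp_ge : ∀ t : ℝ, 1 ≤ p t := fun t => by
    simp only [hpdef]; nlinarith [pow_nonneg (hq0 t) m]
  have hp_pos : ∀ t : ℝ, 0 < p t := fun t => lt_of_lt_of_le one_pos (hp_ge t)
  -- Cauchy-Schwarz bound on q1
  have hq1sq : ∀ t : ℝ, (q1 t)^2 ≤ 4 * (q t * c) := by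
    intro t
    have einner : (inner ℝ (x + t • y) y : ℝ) = b + t * c := by
      rw [inner_add_left, real_inner_smul_left, ← hb, hc, real_inner_self_eq_norm_sq]
    have e2 : (q1 t)^2 = 4 * ((inner ℝ (x + t • y) y : ℝ) * (inner ℝ (x + t • y) y : ℝ)) := by
      rw [einner]; simp only [hq1def]; ring
    have cs := real_inner_mul_inner_self_le (x + t • y) y
    rw [real_inner_self_eq_norm_sq, real_inner_self_eq_norm_sq, ← hq t, ← hc] at cs
    linarith [e2, cs]
  -- derivatives
  have hdq : ∀ t : ℝ, HasDerivAt q (q1 t) t := by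
    intro t
    have : HasDerivAt (fun t : ℝ => a + 2*b*t + c*t^2) (0 + 2*b*1 + c*((2:ℕ)*t^(2-1))) t := by
      exact (((hasDerivAt_const t a).add ((hasDerivAt_id t).const_mul (2*b))).add
        ((hasDerivAt_pow 2 t).const_mul c))
    convert this using 1
    simp [hq1def]; ring
  have hdp : ∀ t : ℝ, HasDerivAt p (p1 t) t := by
    intro t
    have : HasDerivAt (fun t => q t ^ m) ((m:ℝ) * q t ^ (m-1) * q1 t) t := (hdq t).pow m
    simpa [hpdef, hp1def] using this.const_add 1
  have hdh : ∀ t : ℝ, HasDerivAt h (h1 t) t := by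
    intro t
    exact (hdp t).rpow_const (Or.inl (hp_pos t).ne')
  have hdq1 : ∀ t : ℝ, HasDerivAt q1 (2*c) t := by
    intro t
    have : HasDerivAt (fun t : ℝ => 2*b + 2*c*t) (0 + 2*c*1) t :=
      (hasDerivAt_const t (2*b)).add ((hasDerivAt_id t).const_mul (2*c))
    simpa [hq1def] using this
  have hdp1 : ∀ t : ℝ, HasDerivAt p1 (p2 t) t := by
    intro t
    have hq1' : HasDerivAt (fun t => q t ^ (m-1)) (((m-1:ℕ):ℝ) * q t ^ (m-1-1) * q1 t) t :=
      (hdq t).pow (m-1)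
    have e1 : p1 = fun t => (m:ℝ) * (q t ^ (m-1) * q1 t) := by
      funext u; simp only [hp1def]; ring
    rw [e1]
    have := ((hq1'.mul (hdq1 t)).const_mul (m:ℝ))
    refine this.congr_deriv ?_
    simp only [hp2def]
    have hcast : ((m-1:ℕ):ℝ) = (m:ℝ) - 1 := by
      have := Nat.cast_sub hm (R := ℝ); simpa using this
    rw [hcast]
    have : m - 1 - 1 = m - 2 := by omega
    rw [this]
    ring
  have hdh1 : ∀ t : ℝ, HasDerivAt h1 (h2 t) t := by
    intro t
    have hrp : HasDerivAt (fun t => p t ^ (-μ-1)) (p1 t * (-μ-1) * p t ^ (-μ-1-1)) t :=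
      (hdp t).rpow_const (Or.inl (hp_pos t).ne')
    have := ((hdp1 t).mul hrp).const_mul (-μ)
    have e : h1 = fun t => (-μ) * (p1 t * p t ^ (-μ-1)) := by
      funext t; simp only [hh1def]; ring
    rw [e]
    refine this.congr_deriv ?_
    simp only [hh2def]
    have : -μ - 1 - 1 = -μ - 2 := by ring
    rw [this]
    ring
  -- pointwise bound on h2
  have hc0 : 0 ≤ c := by rw [hc]; positivity
  have hbound : ∀ t : ℝ, |h2 t| ≤ 12 * (m:ℝ)^2 * c * p t ^ (-μ) := by
    intro t
    simp only [hh2def, hp2def, hp1def, hpdef]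
    exact h2bound hm hμ0 hμ1 (hq0 t) hc0 (hq1sq t) rfl
  -- comparability with the weight at x
  have hWpos : (0:ℝ) < (1 + ‖x‖ ^ (2*m)) ^ (-μ) := by positivity
  have hpw : ∀ t : ℝ, p t = 1 + ‖x + t • y‖ ^ (2*m) := by
    intro t
    simp only [hpdef]
    rw [hq t, ← pow_mul]
  have hcomp : ∀ t ∈ Set.Icc (-1:ℝ) 1,
      p t ^ (-μ) ≤ 2 ^ (2*m+1) * (1 + ‖x‖ ^ (2*m)) ^ (-μ) := by
    intro t ht
    rw [hpw t]
    apply comp_bound hμ0.le hμ1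
    have : x + t • y - x = t • y := by abel
    rw [this, norm_smul, Real.norm_eq_abs]
    have h1 : |t| ≤ 1 := abs_le.mpr ⟨ht.1, ht.2⟩
    calc |t| * ‖y‖ ≤ 1 * 1 := by
          apply mul_le_mul h1 hy (norm_nonneg y) zero_le_one
      _ = 1 := by norm_num
  set B : ℝ := 12 * (m:ℝ)^2 * c * (2 ^ (2*m+1) * (1 + ‖x‖ ^ (2*m)) ^ (-μ)) with hB
  have hB0 : 0 ≤ B := by rw [hB]; positivity
  have hbound' : ∀ t ∈ Set.Icc (-1:ℝ) 1, ‖h2 t‖ ≤ B := by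
    intro t ht
    rw [Real.norm_eq_abs]
    calc |h2 t| ≤ 12 * (m:ℝ)^2 * c * p t ^ (-μ) := hbound t
      _ ≤ B := by
          rw [hB]
          apply mul_le_mul_of_nonneg_left (hcomp t ht) (by positivity)
  -- first MVT: bound h1 t - h1 (-t)
  have hmvt1 : ∀ t ∈ Set.Icc (0:ℝ) 1, ‖h1 t - h1 (-t)‖ ≤ 2 * B := by
    intro t ht
    have hmem1 : t ∈ Set.Icc (-1:ℝ) 1 := ⟨by linarith [ht.1], ht.2⟩
    have hmem2 : -t ∈ Set.Icc (-1:ℝ) 1 := ⟨by linarith [ht.2], by linarith [ht.1]⟩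
    have := Convex.norm_image_sub_le_of_norm_hasDerivWithin_le
      (f := h1) (f' := h2) (s := Set.Icc (-1:ℝ) 1)
      (fun u hu => (hdh1 u).hasDerivWithinAt) hbound' (convex_Icc _ _) hmem2 hmem1
    calc ‖h1 t - h1 (-t)‖ ≤ B * ‖t - (-t)‖ := this
      _ ≤ 2 * B := by
          rw [Real.norm_eq_abs]
          have : |t - (-t)| = 2*t := by
            rw [abs_of_nonneg (by linarith [ht.1])]; ring
          rw [this]
          nlinarith [ht.1, ht.2, hB0]
  -- second MVT on φ
  set φ : ℝ → ℝ := fun t => h t + h (-t) - 2 * h 0 with hφdef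
  have hdφ : ∀ t : ℝ, HasDerivAt φ (h1 t - h1 (-t)) t := by
    intro t
    have hneg : HasDerivAt (fun u : ℝ => h (-u)) (h1 (-t) * (-1)) t :=
      HasDerivAt.comp t (hdh (-t)) (hasDerivAt_neg t)
    have := ((hdh t).add hneg).sub_const (2 * h 0)
    refine this.congr_deriv ?_
    ring
  have hmvt2 : ‖φ 1 - φ 0‖ ≤ (2*B) * ‖(1:ℝ) - 0‖ := by
    apply Convex.norm_image_sub_le_of_norm_hasDerivWithin_le
      (f := φ) (f' := fun t => h1 t - h1 (-t)) (s := Set.Icc (0:ℝ) 1)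
      (fun u hu => (hdφ u).hasDerivWithinAt) hmvt1 (convex_Icc _ _)
      (Set.mem_Icc.mpr ⟨le_refl 0, zero_le_one⟩)
      (Set.mem_Icc.mpr ⟨zero_le_one, le_refl 1⟩)
  have hφ0 : φ 0 = 0 := by simp only [hφdef, neg_zero]; ring
  have hh0 : h 0 = (1 + ‖x‖ ^ (2*m)) ^ (-μ) := by
    simp only [hhdef]
    rw [hpw 0]
    norm_num
  have hh1v : h 1 = (1 + ‖x + y‖ ^ (2*m)) ^ (-μ) := by
    simp only [hhdef]
    rw [hpw 1, one_smul]
  have hhm1 : h (-1) = (1 + ‖x - y‖ ^ (2*m)) ^ (-μ) := by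
    simp only [hhdef]
    rw [hpw (-1)]
    congr 3
    rw [neg_smul, one_smul, sub_eq_add_neg]
  have hfinal : |2 * (1 + ‖x‖ ^ (2*m)) ^ (-μ) - (1 + ‖x + y‖ ^ (2*m)) ^ (-μ)
      - (1 + ‖x - y‖ ^ (2*m)) ^ (-μ)| ≤ 2 * B := by
    have e : 2 * (1 + ‖x‖ ^ (2*m)) ^ (-μ) - (1 + ‖x + y‖ ^ (2*m)) ^ (-μ)
        - (1 + ‖x - y‖ ^ (2*m)) ^ (-μ) = -(φ 1 - φ 0) := by
      rw [hφ0, hφdef]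
      simp only
      rw [hh0, hh1v, hhm1]
      ring
    rw [e, abs_neg]
    calc |φ 1 - φ 0| = ‖φ 1 - φ 0‖ := (Real.norm_eq_abs _).symm
      _ ≤ (2*B) * ‖(1:ℝ) - 0‖ := hmvt2
      _ = 2*B := by simp
  calc |2 * (1 + ‖x‖ ^ (2*m)) ^ (-μ) - (1 + ‖x + y‖ ^ (2*m)) ^ (-μ)
      - (1 + ‖x - y‖ ^ (2*m)) ^ (-μ)| ≤ 2 * B := hfinal
    _ = (24 * (m:ℝ)^2 * 2 ^ (2*m + 1)) * (1 + ‖x‖ ^ (2*m)) ^ (-μ) * ‖y‖ ^ 2 := by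
        rw [hB, hc]
        ring

lemma pow_rpow_comm {x : ℝ} (hx : 0 ≤ x) (j : ℕ) (r : ℝ) :
    ((x ^ j : ℝ)) ^ r = (x ^ r) ^ j := by
  rw [← Real.rpow_natCast x j, ← Real.rpow_mul hx, mul_comm, Real.rpow_mul hx,
    Real.rpow_natCast]

lemma finite_J {n : ℕ} (hn : 1 ≤ n) {α : ℝ} (hα0 : 0 < α) (hα2 : α < 2) :
    (∫⁻ y in {y : EuclideanSpace ℝ (Fin n) | ‖y‖ ≤ 1},
      ENNReal.ofReal (‖y‖ ^ 2 / ‖y‖ ^ ((n : ℝ) + α))) < ⊤ := by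
  haveI : Nontrivial (EuclideanSpace ℝ (Fin n)) := by
    refine ⟨⟨EuclideanSpace.single (⟨0, hn⟩ : Fin n) (1:ℝ), 0, fun h => ?_⟩⟩
    have := congrArg norm h
    rw [EuclideanSpace.norm_single, norm_zero] at this
    norm_num at this
  set S : Set (EuclideanSpace ℝ (Fin n)) := {y : (EuclideanSpace ℝ (Fin n)) | ‖y‖ ≤ 1} with hSdef
  set r : ℝ := 2 - ((n : ℝ) + α) with hrdef
  have hSmeas : MeasurableSet S := (isClosed_le continuous_norm continuous_const).measurableSet
  -- a.e. rewrite to a single rpow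
  have hae : (fun y : (EuclideanSpace ℝ (Fin n)) => ENNReal.ofReal (‖y‖ ^ 2 / ‖y‖ ^ ((n : ℝ) + α)))
      =ᵐ[volume.restrict S] (fun y : (EuclideanSpace ℝ (Fin n)) => ENNReal.ofReal (‖y‖ ^ r)) := by
    have hsub : {y : (EuclideanSpace ℝ (Fin n)) | ¬ ENNReal.ofReal (‖y‖ ^ 2 / ‖y‖ ^ ((n : ℝ) + α))
        = ENNReal.ofReal (‖y‖ ^ r)} ⊆ {(0 : (EuclideanSpace ℝ (Fin n)))} := by
      intro y hy
      simp only [Set.mem_setOf_eq] at hy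
      by_contra h0
      apply hy
      have hyn : (0:ℝ) < ‖y‖ := norm_pos_iff.mpr (by simpa using h0)
      congr 1
      rw [hrdef, Real.rpow_sub hyn]
      congr 1
      rw [show (2:ℝ) = ((2:ℕ):ℝ) by norm_num, Real.rpow_natCast]
    have h1 : (fun y : (EuclideanSpace ℝ (Fin n)) => ENNReal.ofReal (‖y‖ ^ 2 / ‖y‖ ^ ((n : ℝ) + α)))
        =ᵐ[volume] (fun y : (EuclideanSpace ℝ (Fin n)) => ENNReal.ofReal (‖y‖ ^ r)) :=
      measure_mono_null hsub (measure_singleton 0)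
    exact h1.restrict
  rw [lintegral_congr_ae hae]
  rcases le_or_gt 0 r with hr | hr
  · -- easy case : bounded integrand
    have hb : ∀ y ∈ S, ENNReal.ofReal (‖y‖ ^ r) ≤ ENNReal.ofReal 1 := by
      intro y hy
      apply ENNReal.ofReal_le_ofReal
      rcases eq_or_lt_of_le hr with hr0 | hr0
      · rw [← hr0, Real.rpow_zero]
      · rcases eq_or_ne ‖y‖ 0 with h0 | h0
        · rw [h0, Real.zero_rpow hr0.ne']; norm_num
        · exact Real.rpow_le_one (norm_nonneg y) hy hr
    calc (∫⁻ y in S, ENNReal.ofReal (‖y‖ ^ r))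
        ≤ ∫⁻ _ in S, ENNReal.ofReal 1 := setLIntegral_mono' hSmeas hb
      _ = ENNReal.ofReal 1 * volume S := setLIntegral_const S _
      _ < ⊤ := by
          apply ENNReal.mul_lt_top ENNReal.ofReal_lt_top
          have : S = Metric.closedBall (0 : (EuclideanSpace ℝ (Fin n))) 1 := by
            ext y; simp [hSdef, Metric.mem_closedBall, dist_zero_right]
          rw [this]
          exact measure_closedBall_lt_top
  · -- singular case
    set u : ℝ := (1/2 : ℝ) ^ r with hudef
    have hu0 : 0 < u := Real.rpow_pos_of_pos (by norm_num) r
    set A : ℕ → Set (EuclideanSpace ℝ (Fin n)) := fun k => {y : (EuclideanSpace ℝ (Fin n)) | (1/2:ℝ)^(k+1) < ‖y‖ ∧ ‖y‖ ≤ (1/2:ℝ)^k} with hAdef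
    have hAmeas : ∀ k, MeasurableSet (A k) := by
      intro k
      have : A k = {y : (EuclideanSpace ℝ (Fin n)) | (1/2:ℝ)^(k+1) < ‖y‖} ∩ {y : (EuclideanSpace ℝ (Fin n)) | ‖y‖ ≤ (1/2:ℝ)^k} := by
        ext y; simp [hAdef, Set.mem_setOf_eq]
      rw [this]
      exact ((isOpen_lt continuous_const continuous_norm).measurableSet).inter
        ((isClosed_le continuous_norm continuous_const).measurableSet)
    have hsub : S ⊆ {(0:(EuclideanSpace ℝ (Fin n)))} ∪ ⋃ k, A k := by
      intro y hy
      rcases eq_or_ne y 0 with h | h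
      · left; simp [h]
      · right
        have h0 : 0 < ‖y‖ := norm_pos_iff.mpr h
        have hex : ∃ k, (1/2:ℝ)^(k+1) < ‖y‖ := by
          obtain ⟨j, hj⟩ := exists_pow_lt_of_lt_one h0 (by norm_num : (1/2:ℝ) < 1)
          refine ⟨j, lt_of_le_of_lt ?_ hj⟩
          exact pow_le_pow_of_le_one (by norm_num) (by norm_num) (Nat.le_succ j)
        refine Set.mem_iUnion.mpr ⟨Nat.find hex, Nat.find_spec hex, ?_⟩
        rcases Nat.eq_zero_or_pos (Nat.find hex) with hk | hk
        · rw [hk, pow_zero]; exact hy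
        · have hmin := Nat.find_min hex (m := Nat.find hex - 1) (by omega)
          push_neg at hmin
          have : Nat.find hex - 1 + 1 = Nat.find hex := by omega
          rwa [this] at hmin
    set V := volume (Metric.ball (0:(EuclideanSpace ℝ (Fin n))) 1) with hV
    have hVfin : V < ⊤ := measure_ball_lt_top
    set ρ : ENNReal := ENNReal.ofReal (u * (1/2:ℝ)^n) with hρdef
    have hρ1 : ρ < 1 := by
      rw [hρdef]
      rw [ENNReal.ofReal_lt_one]
      have : u * (1/2:ℝ)^n = (1/2:ℝ) ^ (r + n) := by
        rw [Real.rpow_add (by norm_num : (0:ℝ) < 1/2), hudef, Real.rpow_natCast]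
      rw [this]
      apply Real.rpow_lt_one (by norm_num) (by norm_num)
      rw [hrdef]; linarith
    have hterm : ∀ k, (∫⁻ y in A k, ENNReal.ofReal (‖y‖ ^ r))
        ≤ (ENNReal.ofReal u * V) * ρ ^ k := by
      intro k
      have hb : ∀ y ∈ A k, ENNReal.ofReal (‖y‖ ^ r) ≤ ENNReal.ofReal (u ^ (k+1)) := by
        intro y hy
        apply ENNReal.ofReal_le_ofReal
        have h1 : ((1/2:ℝ)^(k+1)) ^ r = u ^ (k+1) := pow_rpow_comm (by norm_num) (k+1) r
        rw [← h1]
        exact Real.rpow_le_rpow_of_nonpos (by positivity) hy.1.le hr.le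
      have hvol : volume (A k) ≤ ENNReal.ofReal (((1/2:ℝ)^k)^n) * V := by
        have hsub2 : A k ⊆ Metric.closedBall (0:(EuclideanSpace ℝ (Fin n))) ((1/2:ℝ)^k) := by
          intro y hy
          rw [Metric.mem_closedBall, dist_zero_right]
          exact hy.2
        calc volume (A k) ≤ volume (Metric.closedBall (0:(EuclideanSpace ℝ (Fin n))) ((1/2:ℝ)^k)) :=
              measure_mono hsub2
          _ = ENNReal.ofReal (((1/2:ℝ)^k) ^ Module.finrank ℝ (EuclideanSpace ℝ (Fin n))) * V :=
              Measure.addHaar_closedBall _ _ (by positivity)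
          _ = ENNReal.ofReal (((1/2:ℝ)^k)^n) * V := by
              rw [finrank_euclideanSpace_fin]
      calc (∫⁻ y in A k, ENNReal.ofReal (‖y‖ ^ r))
          ≤ ∫⁻ _ in A k, ENNReal.ofReal (u ^ (k+1)) := setLIntegral_mono' (hAmeas k) hb
        _ = ENNReal.ofReal (u ^ (k+1)) * volume (A k) := setLIntegral_const _ _
        _ ≤ ENNReal.ofReal (u ^ (k+1)) * (ENNReal.ofReal (((1/2:ℝ)^k)^n) * V) :=
            mul_le_mul_right hvol _
        _ = (ENNReal.ofReal u * V) * ρ ^ k := by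
            rw [hρdef, pow_succ, pow_right_comm]
            rw [ENNReal.ofReal_mul (by positivity), ENNReal.ofReal_mul (by positivity),
              ENNReal.ofReal_pow (by positivity), ENNReal.ofReal_pow (by positivity),
              ENNReal.ofReal_pow (by positivity)]
            ring
    calc (∫⁻ y in S, ENNReal.ofReal (‖y‖ ^ r))
        ≤ ∫⁻ y in ({(0:(EuclideanSpace ℝ (Fin n)))} ∪ ⋃ k, A k), ENNReal.ofReal (‖y‖ ^ r) :=
          lintegral_mono_set hsub
      _ ≤ (∫⁻ y in {(0:(EuclideanSpace ℝ (Fin n)))}, ENNReal.ofReal (‖y‖ ^ r))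
            + ∫⁻ y in (⋃ k, A k), ENNReal.ofReal (‖y‖ ^ r) := lintegral_union_le _ _ _
      _ ≤ 0 + ∑' k, ∫⁻ y in A k, ENNReal.ofReal (‖y‖ ^ r) := by
          apply add_le_add
          · rw [Measure.restrict_eq_zero.mpr (measure_singleton _), lintegral_zero_measure]
          · exact lintegral_iUnion_le _ _
      _ ≤ 0 + ∑' k, (ENNReal.ofReal u * V) * ρ ^ k := by
          exact add_le_add_right (ENNReal.tsum_le_tsum hterm) 0
      _ = (ENNReal.ofReal u * V) * (1 - ρ)⁻¹ := by
          rw [zero_add, ENNReal.tsum_mul_left, ENNReal.tsum_geometric]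
      _ < ⊤ := by
          apply ENNReal.mul_lt_top (ENNReal.mul_lt_top ENNReal.ofReal_lt_top hVfin)
          rw [ENNReal.inv_lt_top]
          exact tsub_pos_of_lt hρ1

lemma div_le_div_nonneg_denom {a b d : ℝ} (h : a ≤ b) (hd : 0 ≤ d) : a / d ≤ b / d := by
  rcases eq_or_lt_of_le hd with h0 | h0
  · rw [← h0]; simp
  · exact div_le_div_of_nonneg_right h hd


/-- The Muckenhoupt-type weight `w_{λ,κ}(x) = (1 + |x|^κ)^(−λ/κ)` on `ℝⁿ`. -/
noncomputable def weight (n : ℕ) (lam : ℝ) (kap : ℕ) (x : EuclideanSpace ℝ (Fin n)) : ℝ :=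
  (1 + ‖x‖ ^ kap) ^ (-(lam / (kap : ℝ)))

theorem stmt_12 (n : ℕ) (hn : 1 ≤ n) (α : ℝ) (hα : α ∈ Set.Ioo (0 : ℝ) 2)
    (lam : ℝ) (hlam : lam ∈ Set.Ioo (0 : ℝ) 1)
    (kap : ℕ) (hkap : 2 ≤ kap) (hke : Even kap) :
    ∃ C > 0, ∀ x : EuclideanSpace ℝ (Fin n),
      (∫⁻ y in {y : EuclideanSpace ℝ (Fin n) | ‖y‖ ≤ 1},
          ENNReal.ofReal
            (|2 * weight n lam kap x - weight n lam kap (x + y) - weight n lam kap (x - y)| /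
              ‖y‖ ^ ((n : ℝ) + α))) ≤
        ENNReal.ofReal (C * weight n lam kap x) := by
  obtain ⟨hα0, hα2⟩ := hα
  obtain ⟨hl0, hl1⟩ := hlam
  obtain ⟨mm, hmm⟩ := hke
  set m : ℕ := kap / 2 with hmdef
  have h2m : 2 * m = kap := by omega
  have hm1 : 1 ≤ m := by omega
  set μ : ℝ := lam / (kap : ℝ) with hμdef
  have hkap0 : (0:ℝ) < (kap : ℝ) := by exact_mod_cast (by omega : 0 < kap)
  have hμ0 : 0 < μ := div_pos hl0 hkap0
  have hμ1 : μ ≤ 1 := by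
    rw [hμdef, div_le_one hkap0]
    have : (1:ℝ) ≤ (kap:ℝ) := by exact_mod_cast (by omega : 1 ≤ kap)
    linarith
  have hwe : ∀ z : EuclideanSpace ℝ (Fin n),
      weight n lam kap z = (1 + ‖z‖ ^ (2*m)) ^ (-μ) := by
    intro z
    rw [weight, h2m, hμdef]
  set S : Set (EuclideanSpace ℝ (Fin n)) := {y | ‖y‖ ≤ 1} with hSdef
  have hSmeas : MeasurableSet S := (isClosed_le continuous_norm continuous_const).measurableSet
  set K₀ : ℝ := 24 * (m:ℝ)^2 * 2^(2*m+1) with hK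
  have hK0 : (0:ℝ) < K₀ := by rw [hK]; positivity
  set J := ∫⁻ y in S, ENNReal.ofReal (‖y‖^2 / ‖y‖^((n:ℝ)+α)) with hJdef
  have hJ : J < ⊤ := finite_J hn hα0 hα2
  have hJ0 : 0 ≤ J.toReal := ENNReal.toReal_nonneg
  refine ⟨K₀ * (J.toReal + 1), by positivity, ?_⟩
  intro x
  have hwx0 : 0 < weight n lam kap x := by rw [hwe]; positivity
  have hptwise : ∀ y ∈ S,
      ENNReal.ofReal
        (|2 * weight n lam kap x - weight n lam kap (x + y) - weight n lam kap (x - y)| /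
          ‖y‖ ^ ((n : ℝ) + α))
      ≤ ENNReal.ofReal ((K₀ * weight n lam kap x) * (‖y‖^2 / ‖y‖^((n:ℝ)+α))) := by
    intro y hy
    apply ENNReal.ofReal_le_ofReal
    have hnum : |2 * weight n lam kap x - weight n lam kap (x + y) - weight n lam kap (x - y)|
        ≤ (K₀ * weight n lam kap x) * ‖y‖^2 := by
      rw [hwe x, hwe (x+y), hwe (x-y), hK]
      calc |2 * (1 + ‖x‖ ^ (2*m)) ^ (-μ) - (1 + ‖x + y‖ ^ (2*m)) ^ (-μ)
          - (1 + ‖x - y‖ ^ (2*m)) ^ (-μ)|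
          ≤ (24 * (m:ℝ)^2 * 2 ^ (2*m + 1)) * (1 + ‖x‖ ^ (2*m)) ^ (-μ) * ‖y‖ ^ 2 :=
            secdiff_bound hm1 hμ0 hμ1 x y hy
        _ = (24 * (m:ℝ)^2 * 2^(2*m+1) * (1 + ‖x‖ ^ (2*m)) ^ (-μ)) * ‖y‖^2 := by ring
    have hd : 0 ≤ ‖y‖ ^ ((n:ℝ)+α) := Real.rpow_nonneg (norm_nonneg y) _
    calc |2 * weight n lam kap x - weight n lam kap (x + y) - weight n lam kap (x - y)| /
          ‖y‖ ^ ((n : ℝ) + α)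
        ≤ ((K₀ * weight n lam kap x) * ‖y‖^2) / ‖y‖ ^ ((n : ℝ) + α) :=
          div_le_div_nonneg_denom hnum hd
      _ = (K₀ * weight n lam kap x) * (‖y‖^2 / ‖y‖ ^ ((n : ℝ) + α)) := by ring
  have hKw0 : (0:ℝ) ≤ K₀ * weight n lam kap x := by positivity
  calc (∫⁻ y in S,
        ENNReal.ofReal
          (|2 * weight n lam kap x - weight n lam kap (x + y) - weight n lam kap (x - y)| /
            ‖y‖ ^ ((n : ℝ) + α)))
      ≤ ∫⁻ y in S, ENNReal.ofReal ((K₀ * weight n lam kap x) * (‖y‖^2 / ‖y‖^((n:ℝ)+α))) :=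
        setLIntegral_mono' hSmeas hptwise
    _ = ∫⁻ y in S, ENNReal.ofReal (K₀ * weight n lam kap x)
          * ENNReal.ofReal (‖y‖^2 / ‖y‖^((n:ℝ)+α)) := by
        apply lintegral_congr
        intro y
        exact ENNReal.ofReal_mul hKw0
    _ = ENNReal.ofReal (K₀ * weight n lam kap x) * J := by
        rw [hJdef]
        exact lintegral_const_mul' _ _ ENNReal.ofReal_ne_top
    _ = ENNReal.ofReal (K₀ * weight n lam kap x) * ENNReal.ofReal J.toReal := by
        rw [ENNReal.ofReal_toReal hJ.ne]
    _ = ENNReal.ofReal ((K₀ * weight n lam kap x) * J.toReal) :=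
        (ENNReal.ofReal_mul hKw0).symm
    _ ≤ ENNReal.ofReal ((K₀ * (J.toReal + 1)) * weight n lam kap x) := by
        apply ENNReal.ofReal_le_ofReal
        nlinarith [mul_pos hK0 hwx0]
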